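/- Let (H_X, H_Z) be a CSS code that has at least one X logical operator, with X distance d_X, and let H_C ∈ F₂^{(n_c−k_c) × n_c} be a classical parity check matrix of full row rank with ker(H_C) ≠ {0}; let d_c be the minimum Hamming weight of a nonzero element of ker(H_C). Let H'_X, H'_Z be the check matrices of the generalized thickened code. Then every x ∈ ker(H'_Z) \ rowspan(H'_X) satisfies |supp(x_A)| ≥ d_X · d_c, |x_A|_C ≥ d_c, and |x_A|_R ≥ d_X. -/
import Mathlib


open Matrix

/-- The `F₂`-span of the rows of a matrix. -/
noncomputable def rowSpan {ι κ : Type*} [Fintype ι] [Fintype κ] (M : Matrix ι κ (ZMod 2)) :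
    Submodule (ZMod 2) (κ → ZMod 2) :=
  Submodule.span (ZMod 2) (Set.range fun i => M i)

/-- The kernel `{v : M v = 0}` of a matrix, as a submodule. -/
noncomputable def kerMat {ι κ : Type*} [Fintype ι] [Fintype κ] (M : Matrix ι κ (ZMod 2)) :
    Submodule (ZMod 2) (κ → ZMod 2) :=
  LinearMap.ker M.mulVecLin

/-- The logical operators `ker(Hker) \ rowspan(Hspan)`. -/
def logicalSet {ι₁ ι₂ κ : Type*} [Fintype ι₁] [Fintype ι₂] [Fintype κ]
    (Hker : Matrix ι₁ κ (ZMod 2)) (Hspan : Matrix ι₂ κ (ZMod 2)) : Set (κ → ZMod 2) :=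
  {v | Hker.mulVec v = 0 ∧ v ∉ rowSpan Hspan}

/-- Minimum Hamming weight over a set of vectors. -/
noncomputable def minWt {ι : Type*} [Fintype ι] (S : Set (ι → ZMod 2)) : ℕ :=
  sInf (hammingNorm '' S)

/-- X check matrix of the generalized thickened code: `( H_X ⊗ I_{n_c} | I_{n_X} ⊗ H_Cᵀ )`.
Region A qubits are indexed by `Fin n × Fin nc`, region B qubits by `Fin nX × Fin r`. -/
def thickX {nX n r nc : ℕ} (HX : Matrix (Fin nX) (Fin n) (ZMod 2))
    (HC : Matrix (Fin r) (Fin nc) (ZMod 2)) :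
    Matrix (Fin nX × Fin nc) ((Fin n × Fin nc) ⊕ (Fin nX × Fin r)) (ZMod 2) :=
  Matrix.of fun s p =>
    match p with
    | Sum.inl (i, c) => if c = s.2 then HX s.1 i else 0
    | Sum.inr (x, j) => if x = s.1 then HC j s.2 else 0

/-- Z check matrix of the generalized thickened code:
first block row `( H_Z ⊗ I_{n_c} | 0 )`,
second block row `( I_n ⊗ H_C | H_Xᵀ ⊗ I_{n_c-k_c} )`. -/
def thickZ {nX nZ n r nc : ℕ} (HX : Matrix (Fin nX) (Fin n) (ZMod 2))
    (HZ : Matrix (Fin nZ) (Fin n) (ZMod 2)) (HC : Matrix (Fin r) (Fin nc) (ZMod 2)) :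
    Matrix ((Fin nZ × Fin nc) ⊕ (Fin n × Fin r)) ((Fin n × Fin nc) ⊕ (Fin nX × Fin r)) (ZMod 2) :=
  Matrix.of fun s p =>
    match s, p with
    | Sum.inl (z, c), Sum.inl (i, c') => if c' = c then HZ z i else 0
    | Sum.inl _, Sum.inr _ => 0
    | Sum.inr (i, j), Sum.inl (i', c) => if i' = i then HC j c else 0
    | Sum.inr (i, j), Sum.inr (x, j') => if j' = j then HX x i else 0

/-- Number of nonzero columns of the region-A part of a vector on the thickened qubits. -/
noncomputable def colWtA {n nc nX r : ℕ}
    (w : ((Fin n × Fin nc) ⊕ (Fin nX × Fin r)) → ZMod 2) : ℕ :=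
  (Finset.univ.filter fun c : Fin nc => ∃ i : Fin n, w (Sum.inl (i, c)) ≠ 0).card

/-- Number of nonzero rows of the region-A part of a vector on the thickened qubits. -/
noncomputable def rowWtA {n nc nX r : ℕ}
    (w : ((Fin n × Fin nc) ⊕ (Fin nX × Fin r)) → ZMod 2) : ℕ :=
  (Finset.univ.filter fun i : Fin n => ∃ c : Fin nc, w (Sum.inl (i, c)) ≠ 0).card

/-- Number of nonzero entries of the region-A part of a vector on the thickened qubits. -/
noncomputable def suppACard {n nc nX r : ℕ}
    (w : ((Fin n × Fin nc) ⊕ (Fin nX × Fin r)) → ZMod 2) : ℕ :=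
  (Finset.univ.filter fun p : Fin n × Fin nc => w (Sum.inl p) ≠ 0).card

lemma dot_rowSpan {m k : ℕ} (M : Matrix (Fin m) (Fin k) (ZMod 2))
    {lam : Fin k → ZMod 2} (hlam : M.mulVec lam = 0)
    {v : Fin k → ZMod 2} (hv : v ∈ rowSpan M) : lam ⬝ᵥ v = 0 := by
  obtain ⟨β, rfl⟩ := (Submodule.mem_span_range_iff_exists_fun _).1 hv
  simp only [dotProduct, Finset.sum_apply, Pi.smul_apply, smul_eq_mul, Finset.mul_sum]
  rw [Finset.sum_comm]
  refine Finset.sum_eq_zero fun i _ => ?_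
  have : ∑ j, lam j * (β i * M i j) = β i * (M.mulVec lam i) := by
    simp only [Matrix.mulVec, dotProduct, Finset.mul_sum]
    exact Finset.sum_congr rfl fun j _ => by ring
  rw [this, hlam]; simp

lemma exists_perp_vec {m k : ℕ} (M : Matrix (Fin m) (Fin k) (ZMod 2))
    {v : Fin k → ZMod 2} (hv : v ∉ rowSpan M) :
    ∃ lam : Fin k → ZMod 2, M.mulVec lam = 0 ∧ lam ⬝ᵥ v ≠ 0 := by
  obtain ⟨f, hfv, hmap⟩ := Submodule.exists_dual_map_eq_bot_of_notMem hv inferInstance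
  set lam : Fin k → ZMod 2 := fun i => f (fun j => if i = j then 1 else 0) with hlam
  have hfx : ∀ x, f x = lam ⬝ᵥ x := by
    intro x
    rw [LinearMap.pi_apply_eq_sum_univ f x]
    simp [dotProduct, hlam, mul_comm, smul_eq_mul]
  refine ⟨lam, ?_, by rw [← hfx]; exact hfv⟩
  funext i
  have hmem : M i ∈ rowSpan M := Submodule.subset_span ⟨i, rfl⟩
  have hf0 : f (M i) = 0 := by
    have : f (M i) ∈ Submodule.map f (rowSpan M) := Submodule.mem_map_of_mem hmem
    rw [hmap] at this
    simpa using this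
  rw [hfx] at hf0
  show M i ⬝ᵥ lam = 0
  rw [dotProduct_comm]; exact hf0

lemma mulVecLin_surj {r nc : ℕ} (HC : Matrix (Fin r) (Fin nc) (ZMod 2))
    (hrank : LinearIndependent (ZMod 2) (fun i : Fin r => HC i)) :
    Function.Surjective HC.mulVecLin := by
  intro w
  by_contra h
  push_neg at h
  have hw : w ∉ LinearMap.range HC.mulVecLin := by
    rintro ⟨v, rfl⟩; exact h v rfl
  obtain ⟨f, hfv, hmap⟩ := Submodule.exists_dual_map_eq_bot_of_notMem hw inferInstance
  set lam : Fin r → ZMod 2 := fun i => f (fun j => if i = j then 1 else 0) with hlam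
  have hfx : ∀ x, f x = lam ⬝ᵥ x := by
    intro x
    rw [LinearMap.pi_apply_eq_sum_univ f x]
    simp [dotProduct, hlam, mul_comm, smul_eq_mul]
  have hker : ∀ v, lam ⬝ᵥ HC.mulVec v = 0 := by
    intro v
    rw [← hfx]
    have : f (HC.mulVec v) ∈ Submodule.map f (LinearMap.range HC.mulVecLin) :=
      Submodule.mem_map_of_mem ⟨v, rfl⟩
    rw [hmap] at this; simpa using this
  have hvm : HC.vecMul lam = 0 := by
    funext j
    have := hker (Pi.single j 1)
    rwa [dotProduct_mulVec, dotProduct_single, mul_one] at this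
  have hlz : lam = 0 := by
    have h2 := Fintype.linearIndependent_iff.mp hrank lam ?_
    · funext i; exact h2 i
    · funext j
      have : (∑ i, lam i • HC i) j = HC.vecMul lam j := by
        simp [Matrix.vecMul, dotProduct, Finset.sum_apply]
      rw [this, hvm]
  apply hfv
  rw [hfx, hlz]
  simp

/-- **Component weight of X logicals of the thickened code:** every X logical operator
`x` of the thickened code has `|supp(x_A)| ≥ d_X·d_c`, `|x_A|_C ≥ d_c` and `|x_A|_R ≥ d_X`. -/
theorem thickened_X_component_weight {nX nZ n r nc : ℕ}
    (HX : Matrix (Fin nX) (Fin n) (ZMod 2)) (HZ : Matrix (Fin nZ) (Fin n) (ZMod 2))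
    (HC : Matrix (Fin r) (Fin nc) (ZMod 2))
    (hcss : HX * HZ.transpose = 0)
    (hrank : LinearIndependent (ZMod 2) (fun i : Fin r => HC i))
    (hkc : ∃ v : Fin nc → ZMod 2, HC.mulVec v = 0 ∧ v ≠ 0)
    (hlog : (logicalSet HZ HX).Nonempty) :
    ∀ x ∈ logicalSet (thickZ HX HZ HC) (thickX HX HC),
      minWt (logicalSet HZ HX) *
          sInf (hammingNorm '' {v : Fin nc → ZMod 2 | HC.mulVec v = 0 ∧ v ≠ 0}) ≤
        suppACard x ∧
      sInf (hammingNorm '' {v : Fin nc → ZMod 2 | HC.mulVec v = 0 ∧ v ≠ 0}) ≤ colWtA x ∧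
      minWt (logicalSet HZ HX) ≤ rowWtA x := by
  intro x hx
  obtain ⟨hker, hnspan⟩ := hx
  -- K1 : each column of the A-part is in ker HZ
  have K1 : ∀ c, HZ.mulVec (fun i => x (Sum.inl (i, c))) = 0 := by
    intro c
    funext z
    have := congrFun hker (Sum.inl (z, c))
    simp only [Matrix.mulVec, dotProduct, Fintype.sum_sum_type, Fintype.sum_prod_type,
      thickZ, Matrix.of_apply, Pi.zero_apply, ite_mul, zero_mul, Finset.sum_ite_eq',
      Finset.mem_univ, if_true, Finset.sum_const_zero, add_zero] at this ⊢
    exact this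
  -- K2
  have K2 : ∀ i j, ∑ c, HC j c * x (Sum.inl (i, c)) + ∑ xx, HX xx i * x (Sum.inr (xx, j)) = 0 := by
    intro i j
    have := congrFun hker (Sum.inr (i, j))
    simp only [Matrix.mulVec, dotProduct, Fintype.sum_sum_type, Fintype.sum_prod_type,
      thickZ, Matrix.of_apply, Pi.zero_apply, ite_mul, zero_mul, Finset.sum_ite_eq',
      Finset.mem_univ, if_true, Finset.sum_const_zero, add_zero] at this
    rw [Finset.sum_comm] at this
    simpa [Finset.sum_ite_eq'] using this
  have K2' : ∀ i j, ∑ c, HC j c * x (Sum.inl (i, c)) = ∑ xx, HX xx i * x (Sum.inr (xx, j)) := by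
    intro i j
    have := K2 i j
    rwa [CharTwo.add_eq_iff_eq_add, zero_add] at this
  -- not all columns lie in rowSpan HX
  have hnotall : ¬ ∀ c : Fin nc, (fun i => x (Sum.inl (i, c))) ∈ rowSpan HX := by
    intro hall
    apply hnspan
    have hall' : ∀ c, ∃ β : Fin nX → ZMod 2,
        ∑ s1, β s1 • HX s1 = fun i => x (Sum.inl (i, c)) := by
      intro c
      exact (Submodule.mem_span_range_iff_exists_fun _).1 (hall c)
    choose α hα using hall'
    have hαp : ∀ c i, ∑ s1, α c s1 * HX s1 i = x (Sum.inl (i, c)) := by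
      intro c i
      have := congrFun (hα c) i
      simpa [Finset.sum_apply] using this
    set yB : Fin nX → Fin r → ZMod 2 :=
      fun xx j => x (Sum.inr (xx, j)) + ∑ s2, α s2 xx * HC j s2 with hyB
    -- columns of yB are in the left kernel of HX
    have hL : ∀ i j, ∑ xx, yB xx j * HX xx i = 0 := by
      intro i j
      have e1 : ∑ xx, yB xx j * HX xx i =
          (∑ xx, HX xx i * x (Sum.inr (xx, j))) +
            ∑ s2, HC j s2 * ∑ xx, α s2 xx * HX xx i := by
        simp only [hyB, add_mul, Finset.sum_add_distrib, Finset.sum_mul, Finset.mul_sum]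
        congr 1
        · exact Finset.sum_congr rfl fun xx _ => mul_comm _ _
        · rw [Finset.sum_comm]
          exact Finset.sum_congr rfl fun xx _ => Finset.sum_congr rfl fun s2 _ => by ring
      rw [e1]
      have e2 : ∑ s2, HC j s2 * ∑ xx, α s2 xx * HX xx i =
          ∑ s2, HC j s2 * x (Sum.inl (i, s2)) := by
        exact Finset.sum_congr rfl fun s2 _ => by rw [hαp]
      rw [e2, ← K2' i j]
      exact CharTwo.add_self_eq_zero _
    -- linear right inverse of HC
    obtain ⟨P, hP⟩ := (HC.mulVecLin).exists_rightInverse_of_surjective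
      (LinearMap.range_eq_top.2 (mulVecLin_surj HC hrank))
    have hPapp : ∀ w, HC.mulVec (P w) = w := by
      intro w
      have := congrFun (congrArg DFunLike.coe hP) w
      simpa [Matrix.mulVecLin_apply] using this
    set Γ : Fin nX → Fin nc → ZMod 2 := fun s1 => P (fun j => yB s1 j) with hΓdef
    have hΓ : ∀ s1 j, ∑ s2, HC j s2 * Γ s1 s2 = yB s1 j := by
      intro s1 j
      have := congrFun (hPapp (fun j => yB s1 j)) j
      simpa [Matrix.mulVec, dotProduct] using this
    have hΓdecomp : ∀ s1, Γ s1 = ∑ j, yB s1 j • P (Pi.single j 1) := by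
      intro s1
      have h1 : (fun j => yB s1 j) = ∑ j, yB s1 j • (Pi.single j 1 : Fin r → ZMod 2) := by
        funext j'
        simp [Finset.sum_apply, Pi.single_apply, Finset.sum_ite_eq, Finset.sum_ite_eq']
      show P (fun j => yB s1 j) = _
      rw [h1, map_sum]
      simp only [LinearMap.map_smul]
    have hΓcol : ∀ c i, ∑ s1, Γ s1 c * HX s1 i = 0 := by
      intro c i
      have e3 : ∀ s1, Γ s1 c = ∑ j, yB s1 j * P (Pi.single j 1) c := by
        intro s1
        rw [hΓdecomp s1]
        simp [Finset.sum_apply]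
      calc ∑ s1, Γ s1 c * HX s1 i
          = ∑ s1, ∑ j, P (Pi.single j 1) c * (yB s1 j * HX s1 i) := by
            refine Finset.sum_congr rfl fun s1 _ => ?_
            rw [e3, Finset.sum_mul]
            exact Finset.sum_congr rfl fun j _ => by ring
        _ = ∑ j, P (Pi.single j 1) c * ∑ s1, yB s1 j * HX s1 i := by
            rw [Finset.sum_comm]
            exact Finset.sum_congr rfl fun j _ => by rw [Finset.mul_sum]
        _ = 0 := by
            refine Finset.sum_eq_zero fun j _ => ?_
            rw [hL i j, mul_zero]
  -- assemble the coefficients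
    simp only [rowSpan]
    rw [Submodule.mem_span_range_iff_exists_fun]
    refine ⟨fun s => α s.2 s.1 + Γ s.1 s.2, ?_⟩
    funext p
    rw [Finset.sum_apply]
    rcases p with ⟨i, c⟩ | ⟨xx, j⟩
    · simp only [Pi.smul_apply, smul_eq_mul, thickX, Matrix.of_apply, Fintype.sum_prod_type,
        mul_ite, mul_zero, Finset.sum_ite_eq, Finset.mem_univ, if_true]
      have : ∑ s1, (α c s1 + Γ s1 c) * HX s1 i =
          (∑ s1, α c s1 * HX s1 i) + ∑ s1, Γ s1 c * HX s1 i := by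
        rw [← Finset.sum_add_distrib]
        exact Finset.sum_congr rfl fun s1 _ => by ring
      rw [this, hαp, hΓcol, add_zero]
    · simp only [Pi.smul_apply, smul_eq_mul, thickX, Matrix.of_apply, Fintype.sum_prod_type,
        mul_ite, mul_zero]
      rw [Finset.sum_comm]
      simp only [Finset.sum_ite_eq, Finset.mem_univ, if_true]
      have : ∑ s2, (α s2 xx + Γ xx s2) * HC j s2 =
          (∑ s2, α s2 xx * HC j s2) + ∑ s2, HC j s2 * Γ xx s2 := by
        rw [← Finset.sum_add_distrib]
        exact Finset.sum_congr rfl fun s2 _ => by ring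
      rw [this, hΓ xx j, hyB]
      show (∑ s2, α s2 xx * HC j s2) + (x (Sum.inr (xx, j)) + ∑ s2, α s2 xx * HC j s2) =
        x (Sum.inr (xx, j))
      rw [add_comm (x (Sum.inr (xx, j))), ← add_assoc, CharTwo.add_self_eq_zero, zero_add]
  -- pick a bad column and a separating vector
  push_neg at hnotall
  obtain ⟨c0, hc0⟩ := hnotall
  obtain ⟨lam, hlam0, hlamv⟩ := exists_perp_vec HX hc0
  set u : Fin nc → ZMod 2 := fun c => ∑ i, lam i * x (Sum.inl (i, c)) with hu
  have huc0 : u c0 ≠ 0 := hlamv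
  have hune : u ≠ 0 := fun h => huc0 (by rw [h]; rfl)
  have huker : HC.mulVec u = 0 := by
    funext j
    show ∑ c, HC j c * u c = 0
    have e1 : ∑ c, HC j c * u c = ∑ i, lam i * ∑ c, HC j c * x (Sum.inl (i, c)) := by
      simp only [hu, Finset.mul_sum]
      rw [Finset.sum_comm]
      exact Finset.sum_congr rfl fun i _ => Finset.sum_congr rfl fun c _ => by ring
    rw [e1]
    have e2 : ∑ i, lam i * ∑ c, HC j c * x (Sum.inl (i, c)) =
        ∑ xx, x (Sum.inr (xx, j)) * (∑ i, HX xx i * lam i) := by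
      simp only [K2', Finset.mul_sum]
      rw [Finset.sum_comm]
      exact Finset.sum_congr rfl fun xx _ => Finset.sum_congr rfl fun i _ => by ring
    rw [e2]
    refine Finset.sum_eq_zero fun xx _ => ?_
    have : ∑ i, HX xx i * lam i = HX.mulVec lam xx := rfl
    rw [this, hlam0, Pi.zero_apply, mul_zero]
  -- columns with u c ≠ 0 are logicals of the base code
  have hcollog : ∀ c, u c ≠ 0 → (fun i => x (Sum.inl (i, c))) ∈ logicalSet HZ HX := by
    intro c hc
    refine ⟨K1 c, fun hmem => hc ?_⟩
    exact dot_rowSpan HX hlam0 hmem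
  have hc0log : (fun i => x (Sum.inl (i, c0))) ∈ logicalSet HZ HX := ⟨K1 c0, hc0⟩
  have hdX : ∀ c, u c ≠ 0 →
      minWt (logicalSet HZ HX) ≤ hammingNorm (fun i => x (Sum.inl (i, c))) := by
    intro c hc
    exact Nat.sInf_le (Set.mem_image_of_mem _ (hcollog c hc))
  have hdc : sInf (hammingNorm '' {v : Fin nc → ZMod 2 | HC.mulVec v = 0 ∧ v ≠ 0}) ≤
      hammingNorm u :=
    Nat.sInf_le ⟨u, ⟨huker, hune⟩, rfl⟩
  have hucol : ∀ c, u c ≠ 0 → ∃ i, x (Sum.inl (i, c)) ≠ 0 := by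
    intro c hc
    by_contra hno
    push_neg at hno
    apply hc
    show ∑ i, lam i * x (Sum.inl (i, c)) = 0
    simp [hno]
  set S : Finset (Fin nc) := Finset.univ.filter fun c => u c ≠ 0 with hS
  have hScard : hammingNorm u = S.card := rfl
  refine ⟨?_, ?_, ?_⟩
  · -- supp bound
    have hsub : S.biUnion (fun c =>
        (Finset.univ.filter fun i => x (Sum.inl (i, c)) ≠ 0).image fun i => (i, c)) ⊆
        Finset.univ.filter fun p : Fin n × Fin nc => x (Sum.inl p) ≠ 0 := by
      intro p hp
      simp only [Finset.mem_biUnion, Finset.mem_image, Finset.mem_filter, Finset.mem_univ,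
        true_and] at hp ⊢
      obtain ⟨c, _, i, hi, rfl⟩ := hp
      exact hi
    have hdisj : ∀ c₁ ∈ S, ∀ c₂ ∈ S, c₁ ≠ c₂ → Disjoint
        ((Finset.univ.filter fun i => x (Sum.inl (i, c₁)) ≠ 0).image fun i => (i, c₁))
        ((Finset.univ.filter fun i => x (Sum.inl (i, c₂)) ≠ 0).image fun i => (i, c₂)) := by
      intro c₁ _ c₂ _ hne
      rw [Finset.disjoint_left]
      rintro ⟨i, c⟩ h1 h2
      simp only [Finset.mem_image] at h1 h2
      obtain ⟨_, _, h1e⟩ := h1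
      obtain ⟨_, _, h2e⟩ := h2
      simp only [Prod.mk.injEq] at h1e h2e
      exact hne (h1e.2.trans h2e.2.symm)
    have hcard := Finset.card_le_card hsub
    rw [Finset.card_biUnion hdisj] at hcard
    have himg : ∀ c : Fin nc,
        ((Finset.univ.filter fun i => x (Sum.inl (i, c)) ≠ 0).image fun i => (i, c)).card =
        hammingNorm (fun i => x (Sum.inl (i, c))) := by
      intro c
      rw [Finset.card_image_of_injective _ (fun a b hab => (Prod.ext_iff.mp hab).1)]
      rfl
    calc minWt (logicalSet HZ HX) *
          sInf (hammingNorm '' {v : Fin nc → ZMod 2 | HC.mulVec v = 0 ∧ v ≠ 0})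
        ≤ minWt (logicalSet HZ HX) * S.card := by
          exact Nat.mul_le_mul_left _ (hScard ▸ hdc)
      _ = ∑ _c ∈ S, minWt (logicalSet HZ HX) := by
          rw [Finset.sum_const, smul_eq_mul, mul_comm]
      _ ≤ ∑ c ∈ S, ((Finset.univ.filter fun i => x (Sum.inl (i, c)) ≠ 0).image
            fun i => (i, c)).card := by
          refine Finset.sum_le_sum fun c hc => ?_
          rw [himg c]
          exact hdX c (by simpa [hS] using hc)
      _ ≤ (Finset.univ.filter fun p : Fin n × Fin nc => x (Sum.inl p) ≠ 0).card := hcard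
      _ = suppACard x := rfl
  · -- column bound
    refine le_trans hdc ?_
    show hammingNorm u ≤ colWtA x
    rw [hScard]
    refine Finset.card_le_card ?_
    intro c hc
    simp only [hS, Finset.mem_filter, Finset.mem_univ, true_and] at hc ⊢
    exact hucol c hc
  · -- row bound
    have h1 : minWt (logicalSet HZ HX) ≤ hammingNorm (fun i => x (Sum.inl (i, c0))) :=
      Nat.sInf_le (Set.mem_image_of_mem _ hc0log)
    refine le_trans h1 ?_
    refine Finset.card_le_card ?_
    intro i hi
    simp only [Finset.mem_filter, Finset.mem_univ, true_and] at hi ⊢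
    exact ⟨c0, hi⟩
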